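/- Let c be a Coxeter element in the Weyl group of an affine root system of rank n. The direct sum U_c of all eigenspaces of c acting on V equals {v ∈ V : K(γ_c, v) = 0}. -/

import Mathlib

open scoped BigOperators

noncomputable section

/-- A symmetrizable generalized Cartan matrix of affine type, together with the
coefficient vector `dz` of the primitive positive imaginary root `δ` spanning the
(one dimensional) kernel of the associated symmetric bilinear form. -/
structure AffineGCM (n : ℕ) where
  /-- the generalized Cartan matrix -/
  a : Matrix (Fin n) (Fin n) ℤ
  /-- symmetrizing factors -/
  d : Fin n → ℝ
  diag : ∀ i, a i i = 2
  offdiag : ∀ i j, i ≠ j → a i j ≤ 0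
  d_pos : ∀ i, 0 < d i
  symmetrizable : ∀ i j, d i * (a i j : ℝ) = d j * (a j i : ℝ)
  /-- `K` is positive semidefinite (on the real span of the simple roots) -/
  posSemidef : ∀ g : Fin n → ℝ, 0 ≤ ∑ i, ∑ j, g i * g j * (d i * (a i j : ℝ))
  /-- `K` is not positive definite -/
  not_posDef : ∃ g : Fin n → ℝ, g ≠ 0 ∧ ∑ i, ∑ j, g i * g j * (d i * (a i j : ℝ)) = 0
  /-- the restriction of `K` to the span of every proper subset of the simple roots
  is positive definite -/
  proper_posDef : ∀ J : Finset (Fin n), J ≠ Finset.univ →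
    ∀ g : Fin n → ℝ, (∀ i, i ∉ J → g i = 0) → g ≠ 0 →
      0 < ∑ i, ∑ j, g i * g j * (d i * (a i j : ℝ))
  /-- coordinates of the positive imaginary root `δ` in the basis of simple roots -/
  dz : Fin n → ℤ
  dz_pos : ∀ i, 0 < dz i
  /-- `δ` is the imaginary root closest to the origin: its coordinates are coprime -/
  dz_prim : Finset.univ.gcd dz = 1
  /-- `δ` spans the kernel of `K` -/
  dz_ker : ∀ j, ∑ i, (dz i : ℝ) * (d i * (a i j : ℝ)) = 0

namespace AffineGCM

variable {n : ℕ}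

/-- The ambient vector space `V`, with the simple roots as standard basis. -/
abbrev V (n : ℕ) := Fin n → ℂ

/-- the simple root `α i` (the `i`-th standard basis vector) -/
def α (i : Fin n) : V n := Pi.single i 1

/-- a vector is *positive* if it lies in the nonnegative real span of the simple roots -/
def IsPosRoot (v : V n) : Prop := ∀ i, 0 ≤ (v i).re ∧ (v i).im = 0

/-- a vector is *negative* if it lies in the nonpositive real span of the simple roots -/
def IsNegRoot (v : V n) : Prop := ∀ i, (v i).re ≤ 0 ∧ (v i).im = 0

/-- the `g`-orbit of `x`: all `g ^ k • x` for integers `k` -/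
def orbit (g : V n ≃ₗ[ℂ] V n) (x : V n) : Set (V n) := Set.range fun k : ℤ => (g ^ k) x

/-- `U g`: the span of all eigenvectors of `g`, i.e. the direct sum of its eigenspaces -/
def eigSpan (g : V n ≃ₗ[ℂ] V n) : Submodule ℂ (V n) :=
  ⨆ μ : ℂ, Module.End.eigenspace (g : Module.End ℂ (V n)) μ

/-- the span `V_fin` of the simple roots other than `α aff` -/
def Vfin (aff : Fin n) : Submodule ℂ (V n) :=
  Submodule.span ℂ (α '' {i : Fin n | i ≠ aff})

variable (C : AffineGCM n)

/-- the simple coroot `α i ^ ∨ = (d i)⁻¹ • α i` -/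
def coroot (i : Fin n) : V n := ((C.d i : ℂ))⁻¹ • α i

/-- The symmetric bilinear form `K`, determined by `K (coroot i) (α j) = a i j`,
that is, `K (α i) (α j) = d i * a i j`. -/
def K : V n →ₗ[ℂ] V n →ₗ[ℂ] ℂ :=
  LinearMap.mk₂ ℂ
    (fun x y => ∑ i, ∑ j, x i * y j * ((C.d i : ℂ) * (C.a i j : ℂ)))
    (fun x x' y => by
      simp only [Pi.add_apply, add_mul, Finset.sum_add_distrib])
    (fun r x y => by
      simp only [Pi.smul_apply, smul_eq_mul, Finset.mul_sum]
      exact Finset.sum_congr rfl fun i _ => Finset.sum_congr rfl fun j _ => by ring)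
    (fun x y y' => by
      simp only [Pi.add_apply, mul_add, add_mul, Finset.sum_add_distrib])
    (fun r x y => by
      simp only [Pi.smul_apply, smul_eq_mul, Finset.mul_sum]
      exact Finset.sum_congr rfl fun i _ => Finset.sum_congr rfl fun j _ => by ring)

/-- the linear map `v ↦ v - K x v • y`; reflections are special cases -/
def reflMap (x y : V n) : V n →ₗ[ℂ] V n where
  toFun v := v - C.K x v • y
  map_add' u v := by simp only [map_add, add_smul]; abel
  map_smul' r u := by simp only [map_smul, smul_eq_mul, RingHom.id_apply, smul_sub, smul_smul]

lemma reflMap_apply (x y v : V n) : C.reflMap x y v = v - C.K x v • y := rfl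

/-- the simple reflection `s i` as a linear endomorphism -/
def sLin (i : Fin n) : V n →ₗ[ℂ] V n := C.reflMap (C.coroot i) (α i)

lemma K_α_α (i j : Fin n) : C.K (α i) (α j) = (C.d i : ℂ) * (C.a i j : ℂ) := by
  simp [K, α, LinearMap.mk₂_apply, Pi.single_apply, ite_mul, zero_mul,
    Finset.sum_ite_eq', Finset.mem_univ]

lemma K_coroot_α (i j : Fin n) : C.K (C.coroot i) (α j) = (C.a i j : ℂ) := by
  have hd : (C.d i : ℂ) ≠ 0 := by exact_mod_cast ne_of_gt (C.d_pos i)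
  simp only [coroot, map_smul, LinearMap.smul_apply, smul_eq_mul, K_α_α]
  field_simp

lemma sLin_invol (i : Fin n) (v : V n) : C.sLin i (C.sLin i v) = v := by
  have h2 : C.K (C.coroot i) (α i) = 2 := by
    rw [K_coroot_α, C.diag]; norm_num
  simp only [sLin, reflMap_apply, map_sub, map_smul, h2, smul_eq_mul]
  module

/-- the simple reflection `s i` -/
def s (i : Fin n) : V n ≃ₗ[ℂ] V n :=
  LinearEquiv.ofLinear (C.sLin i) (C.sLin i)
    (LinearMap.ext fun v => C.sLin_invol i v) (LinearMap.ext fun v => C.sLin_invol i v)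

/-- the Weyl group `W`, as a subgroup of the group of linear automorphisms of `V` -/
def Wgroup : Subgroup (V n ≃ₗ[ℂ] V n) := Subgroup.closure (Set.range C.s)

/-- the Coxeter element `c = s 1 * s 2 * ⋯ * s n` -/
def cox : V n ≃ₗ[ℂ] V n := (List.ofFn C.s).prod

/-- the positive imaginary root `δ` -/
def δv : V n := fun i => ((C.dz i : ℤ) : ℂ)

/-- the set of real roots: `W`-images of the simple roots -/
def realRoots : Set (V n) := {v | ∃ w ∈ C.Wgroup, ∃ i, w (α i) = v}

/-- the root system `Φ`: real roots together with the imaginary roots `k • δ`, `k ≠ 0` -/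
def Φ : Set (V n) := C.realRoots ∪ {v | ∃ k : ℤ, k ≠ 0 ∧ v = (k : ℂ) • C.δv}

/-- `T→ = {α 1, s 1 α 2, …, s 1 ⋯ s (n-1) α n}` -/
def Tproj : Set (V n) :=
  Set.range fun k : Fin n => ((List.ofFn C.s).take k.val).prod (α k)

/-- `T← = {α n, s n α (n-1), …, s n ⋯ s 2 α 1}` -/
def Tinj : Set (V n) :=
  Set.range fun k : Fin n => ((List.ofFn C.s).reverse.take (n - 1 - k.val)).prod (α k)

/-- `Φ_fin`, the finite root system `Φ ∩ V_fin` -/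
def Φfin (aff : Fin n) : Set (V n) := C.Φ ∩ (Vfin aff : Set (V n))

/-- the root `θ = δ - [δ : α aff] • α aff` of `Φ_fin` -/
def θv (aff : Fin n) : V n := C.δv - ((C.dz aff : ℤ) : ℂ) • α aff

/-- the reflection `t β : v ↦ v - K (β^∨) v • β` in a (real) root `β`,
where `β^∨ = (2 / K β β) • β` -/
def tRefl (β : V n) : V n →ₗ[ℂ] V n := C.reflMap ((2 / C.K β β) • β) β

/-- `c_◁ = s 1 * ⋯ * s (aff - 1)` -/
def cleft (aff : Fin n) : V n →ₗ[ℂ] V n := ((List.ofFn C.sLin).take aff.val).prod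

/-- `c_▷ = s (aff + 1) * ⋯ * s n` -/
def cright (aff : Fin n) : V n →ₗ[ℂ] V n := ((List.ofFn C.sLin).drop (aff.val + 1)).prod

/-- `Υ^fin = Φ_fin ∩ U c` -/
def Υfin (aff : Fin n) : Set (V n) := C.Φfin aff ∩ (eigSpan C.cox : Set (V n))

/-- `B` is a simple system for a set `Θ` of roots: a linearly independent subset of `Θ`
such that every element of `Θ` is a nonnegative or a nonpositive combination of `B`. -/
def IsSimpleSystem (Θ : Set (V n)) (B : Finset (V n)) : Prop :=
  ↑B ⊆ Θ ∧ LinearIndependent ℂ (fun b : B => (b : V n)) ∧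
    ∀ v ∈ Θ, ∃ g : V n → ℝ, ((∀ b ∈ B, 0 ≤ g b) ∨ (∀ b ∈ B, g b ≤ 0)) ∧
      v = ∑ b ∈ B, (g b : ℂ) • b

/-- two roots of `Θ` are connected if they are joined by a chain of roots of `Θ`
that are pairwise non-orthogonal (with respect to `K`) -/
def Connected (Θ : Set (V n)) (x y : V n) : Prop :=
  Relation.ReflTransGen (fun u v => u ∈ Θ ∧ v ∈ Θ ∧ C.K u v ≠ 0) x y

/-- the irreducible component of `x` in `Θ` -/
def component (Θ : Set (V n)) (x : V n) : Set (V n) := {y | y ∈ Θ ∧ C.Connected Θ x y}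

/-- a set of roots is of finite type `A` if it consists exactly of the vectors
`±(β i + β (i+1) + ⋯ + β j)` for a linearly independent family `β 1, …, β k` -/
def IsTypeA (Θ : Set (V n)) : Prop :=
  ∃ (k : ℕ) (β : Fin k → V n), LinearIndependent ℂ β ∧ (∀ i, β i ∈ Θ) ∧
    Θ = {v | ∃ i j : Fin k, i ≤ j ∧
      (v = ∑ l ∈ Finset.Icc i j, β l ∨ v = -∑ l ∈ Finset.Icc i j, β l)}

/-- `Ω = {β 1, t (β 1) (β 2), …, t (β 1) ⋯ t (β (m-1)) (β m)}` for an ordered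
tuple `β` of roots -/
def Ωset {m : ℕ} (β : Fin m → V n) : Set (V n) :=
  Set.range fun j : Fin m => (((List.ofFn fun i => C.tRefl (β i)).take j.val).prod) (β j)

/-- `s i` is initial in a Coxeter element `c` if `c` is the product of a permutation
of all the simple reflections starting with `s i` -/
def IsInitial (i : Fin n) (c : V n ≃ₗ[ℂ] V n) : Prop :=
  ∃ l : List (Fin n), (i :: l).Perm (List.finRange n) ∧ ((i :: l).map C.s).prod = c

/-- `s i` is final in a Coxeter element `c` if `c` is the product of a permutation
of all the simple reflections ending with `s i` -/
def IsFinal (i : Fin n) (c : V n ≃ₗ[ℂ] V n) : Prop :=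
  ∃ l : List (Fin n), (l ++ [i]).Perm (List.finRange n) ∧ ((l ++ [i]).map C.s).prod = c

/-- the skew-symmetric bilinear form `ω_c`, determined by
`ω_c (coroot i) (α j) = a i j` if `i > j`, `= 0` if `i = j`, `= -a i j` if `i < j` -/
def ω : V n →ₗ[ℂ] V n →ₗ[ℂ] ℂ :=
  LinearMap.mk₂ ℂ
    (fun x y => ∑ i, ∑ j, x i * y j *
      ((if j < i then 1 else if i = j then 0 else -1) * ((C.d i : ℂ) * (C.a i j : ℂ))))
    (fun x x' y => by
      simp only [Pi.add_apply, add_mul, Finset.sum_add_distrib])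
    (fun r x y => by
      simp only [Pi.smul_apply, smul_eq_mul, Finset.mul_sum]
      exact Finset.sum_congr rfl fun i _ => Finset.sum_congr rfl fun j _ => by ring)
    (fun x y y' => by
      simp only [Pi.add_apply, mul_add, add_mul, Finset.sum_add_distrib])
    (fun r x y => by
      simp only [Pi.smul_apply, smul_eq_mul, Finset.mul_sum]
      exact Finset.sum_congr rfl fun i _ => Finset.sum_congr rfl fun j _ => by ring)

/-! ### Auxiliary lemmas for Proposition 3.1(4) -/

section Aux

variable (C : AffineGCM n)

lemma K_apply' (x y : V n) :
    C.K x y = ∑ i, ∑ j, x i * y j * ((C.d i : ℂ) * (C.a i j : ℂ)) := rfl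

lemma cast_da (i j : Fin n) :
    (C.d i : ℂ) * (C.a i j : ℂ) = ((C.d i * (C.a i j : ℝ) : ℝ) : ℂ) := by
  push_cast; ring

lemma K_symm' (x y : V n) : C.K x y = C.K y x := by
  rw [K_apply', K_apply', Finset.sum_comm]
  refine Finset.sum_congr rfl fun i _ => Finset.sum_congr rfl fun j _ => ?_
  have h := congrArg (Complex.ofReal) (C.symmetrizable j i)
  push_cast at h
  rw [h]; ring

lemma K_apply_α_right (x : V n) (j : Fin n) :
    C.K x (α j) = ∑ i, x i * ((C.d i : ℂ) * (C.a i j : ℂ)) := by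
  rw [K_apply']
  refine Finset.sum_congr rfl fun i _ => ?_
  simp [α, Pi.single_apply, ite_mul, mul_ite]

lemma K_apply_α_left (i : Fin n) (y : V n) :
    C.K (α i) y = ∑ j, y j * ((C.d i : ℂ) * (C.a i j : ℂ)) := by
  rw [K_apply']
  rw [show (∑ k, ∑ j, (α i : V n) k * y j * ((C.d k : ℂ) * (C.a k j : ℂ)))
      = ∑ k, (if k = i then ∑ j, y j * ((C.d k : ℂ) * (C.a k j : ℂ)) else 0) from
    Finset.sum_congr rfl fun k _ => by
      split
      · subst ‹k = i›
        refine Finset.sum_congr rfl fun j _ => ?_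
        simp [α]
      · refine Finset.sum_eq_zero fun j _ => ?_
        simp [α, Pi.single_apply, ‹¬ k = i›]]
  simp

lemma row_ker_c (j : Fin n) :
    ∑ i, ((C.dz i : ℤ) : ℂ) * ((C.d i : ℂ) * (C.a i j : ℂ)) = 0 := by
  have h := congrArg (Complex.ofReal) (C.dz_ker j)
  push_cast at h
  convert h using 2 with i

lemma col_ker_c (i : Fin n) :
    ∑ j, ((C.dz j : ℤ) : ℂ) * ((C.d i : ℂ) * (C.a i j : ℂ)) = 0 := by
  have : ∀ j, ((C.dz j : ℤ) : ℂ) * ((C.d i : ℂ) * (C.a i j : ℂ))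
      = ((C.dz j : ℤ) : ℂ) * ((C.d j : ℂ) * (C.a j i : ℂ)) := by
    intro j
    have h := congrArg (Complex.ofReal) (C.symmetrizable i j)
    push_cast at h
    rw [h]
  simp_rw [this]
  exact C.row_ker_c i

lemma K_right_δ (x : V n) : C.K x C.δv = 0 := by
  rw [K_apply']
  refine Finset.sum_eq_zero fun i _ => ?_
  have : ∀ j, x i * C.δv j * ((C.d i : ℂ) * (C.a i j : ℂ))
      = x i * (((C.dz j : ℤ) : ℂ) * ((C.d i : ℂ) * (C.a i j : ℂ))) := fun j => by
    simp only [δv]; ring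
  simp_rw [this, ← Finset.mul_sum, C.col_ker_c i, mul_zero]

lemma K_left_δ (y : V n) : C.K C.δv y = 0 := by
  rw [K_symm']; exact C.K_right_δ y

lemma K_coroot_eq (i : Fin n) (w : V n) :
    C.K (C.coroot i) w = ((C.d i : ℂ))⁻¹ * C.K (α i) w := by
  simp [coroot, map_smul]

lemma d_ne_zero (i : Fin n) : (C.d i : ℂ) ≠ 0 := by
  exact_mod_cast ne_of_gt (C.d_pos i)

lemma K_α_eq (i : Fin n) (w : V n) :
    C.K (α i) w = (C.d i : ℂ) * C.K (C.coroot i) w := by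
  rw [K_coroot_eq, ← mul_assoc, mul_inv_cancel₀ (C.d_ne_zero i), one_mul]

lemma K_sLin (i : Fin n) (u v : V n) : C.K (C.sLin i u) (C.sLin i v) = C.K u v := by
  have h2 : C.K (α i) (α i) = 2 * (C.d i : ℂ) := by
    rw [C.K_α_α, C.diag]; push_cast; ring
  have hu : C.K (α i) u = (C.d i : ℂ) * C.K (C.coroot i) u := C.K_α_eq i u
  have hv : C.K (α i) v = (C.d i : ℂ) * C.K (C.coroot i) v := C.K_α_eq i v
  have expand : C.K (C.sLin i u) (C.sLin i v)
      = C.K u v - C.K (C.coroot i) v * C.K u (α i)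
        - C.K (C.coroot i) u * C.K (α i) v
        + C.K (C.coroot i) u * (C.K (C.coroot i) v * C.K (α i) (α i)) := by
    simp only [sLin, reflMap_apply, map_sub, map_smul, LinearMap.sub_apply,
      LinearMap.smul_apply, smul_eq_mul]
    ring
  rw [expand, C.K_symm' u (α i), hu, hv, h2]
  ring

lemma sLin_apply' (i : Fin n) (v : V n) :
    C.sLin i v = v - C.K (C.coroot i) v • α i := rfl

lemma prodS_eq_prodLin (l : List (Fin n)) (v : V n) :
    (((l.map C.s).prod : V n ≃ₗ[ℂ] V n) : V n → V n) v = ((l.map C.sLin).prod) v := by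
  induction l generalizing v with
  | nil => simp
  | cons i t ih =>
    simp only [List.map_cons, List.prod_cons, Module.End.mul_apply]
    rw [show ((C.s i * (t.map C.s).prod : V n ≃ₗ[ℂ] V n) : V n → V n) v
        = C.s i (((t.map C.s).prod : V n ≃ₗ[ℂ] V n) v) from rfl, ih]
    rfl

lemma cox_apply' (v : V n) :
    C.cox v = (((List.finRange n).map C.sLin).prod) v := by
  rw [cox, List.ofFn_eq_map]
  exact C.prodS_eq_prodLin _ v

lemma prodLin_K (l : List (Fin n)) (u v : V n) :
    C.K (((l.map C.sLin).prod) u) (((l.map C.sLin).prod) v) = C.K u v := by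
  induction l generalizing u v with
  | nil => simp
  | cons i t ih =>
    simp only [List.map_cons, List.prod_cons, Module.End.mul_apply]
    rw [C.K_sLin, ih]

lemma cox_K (u v : V n) : C.K (C.cox u) (C.cox v) = C.K u v := by
  rw [C.cox_apply' u, C.cox_apply' v, C.prodLin_K]

lemma sLin_δ (i : Fin n) : C.sLin i C.δv = C.δv := by
  rw [sLin_apply', C.K_coroot_eq, C.K_α_eq, C.K_coroot_eq]
  rw [show C.K (α i) C.δv = 0 from C.K_right_δ (α i)]
  simp

lemma prodLin_δ (l : List (Fin n)) : ((l.map C.sLin).prod) C.δv = C.δv := by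
  induction l with
  | nil => simp
  | cons i t ih =>
    simp only [List.map_cons, List.prod_cons, Module.End.mul_apply, ih, C.sLin_δ]

lemma cox_δ : C.cox C.δv = C.δv := by
  rw [C.cox_apply', C.prodLin_δ]

/-- complex conjugation on `V n` -/
def cj (v : V n) : V n := fun i => (starRingEnd ℂ) (v i)

lemma cj_K (u v : V n) : C.K (cj u) (cj v) = (starRingEnd ℂ) (C.K u v) := by
  rw [K_apply', K_apply', map_sum]
  refine Finset.sum_congr rfl fun i _ => ?_
  rw [map_sum]
  refine Finset.sum_congr rfl fun j _ => ?_
  simp [cj, map_mul, cast_da, Complex.conj_ofReal, ← Complex.ofReal_intCast]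

lemma cj_coroot (i : Fin n) : cj (C.coroot i) = C.coroot i := by
  funext k
  simp only [cj, coroot, Pi.smul_apply, α, smul_eq_mul, map_mul, map_inv₀,
    Complex.conj_ofReal, Pi.single_apply]
  split <;> simp

lemma cj_sLin (i : Fin n) (v : V n) : cj (C.sLin i v) = C.sLin i (cj v) := by
  have hK : (starRingEnd ℂ) (C.K (C.coroot i) v) = C.K (C.coroot i) (cj v) := by
    rw [← C.cj_K, cj_coroot]
  funext k
  show (starRingEnd ℂ) ((C.sLin i v) k) = (C.sLin i (cj v)) k
  rw [sLin_apply', sLin_apply', Pi.sub_apply, Pi.sub_apply, Pi.smul_apply, Pi.smul_apply,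
    smul_eq_mul, smul_eq_mul, map_sub, map_mul, hK,
    show (starRingEnd ℂ) ((α i : V n) k) = (α i : V n) k by
      simp [α, Pi.single_apply, apply_ite]]
  try rfl

lemma cj_prodLin (l : List (Fin n)) (v : V n) :
    cj (((l.map C.sLin).prod) v) = ((l.map C.sLin).prod) (cj v) := by
  induction l generalizing v with
  | nil => simp
  | cons i t ih =>
    simp only [List.map_cons, List.prod_cons, Module.End.mul_apply, C.cj_sLin, ih]

lemma cj_cox (v : V n) : cj (C.cox v) = C.cox (cj v) := by
  rw [C.cox_apply', C.cox_apply', C.cj_prodLin]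

lemma cj_δ : cj (C.δv : V n) = C.δv := by
  funext k
  simp [cj, δv, ← Complex.ofReal_intCast, Complex.conj_ofReal]

lemma coords_unchanged (l : List (Fin n)) (v : V n) (j : Fin n) (hj : j ∉ l) :
    (((l.map C.sLin).prod) v) j = v j := by
  induction l generalizing v with
  | nil => simp
  | cons i t ih =>
    simp only [List.map_cons, List.prod_cons, Module.End.mul_apply]
    have hji : j ≠ i := fun h => hj (h ▸ List.mem_cons_self (a := i) (l := t))
    have hjt : j ∉ t := fun h => hj (List.mem_cons_of_mem i h)
    rw [sLin_apply', Pi.sub_apply, Pi.smul_apply, smul_eq_mul]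
    rw [show (α i : V n) j = 0 from Pi.single_eq_of_ne hji 1]
    rw [mul_zero, sub_zero, ih _ hjt]

lemma peel (l : List (Fin n)) (hnd : l.Nodup) (v : V n)
    (hv : ((l.map C.sLin).prod) v = v) : ∀ i ∈ l, C.K (C.coroot i) v = 0 := by
  induction l with
  | nil => intro i hi; exact absurd hi List.not_mem_nil
  | cons i t ih =>
    have hit : i ∉ t := (List.nodup_cons.mp hnd).1
    have hndt : t.Nodup := (List.nodup_cons.mp hnd).2
    simp only [List.map_cons, List.prod_cons, Module.End.mul_apply] at hv
    set w := ((t.map C.sLin).prod) v with hw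
    have hwi : w i = v i := C.coords_unchanged t v i hit
    have hKi : C.K (C.coroot i) w = 0 := by
      have := congrFun hv i
      rw [sLin_apply', Pi.sub_apply, Pi.smul_apply, smul_eq_mul,
        show (α i : V n) i = 1 from Pi.single_eq_same i 1, mul_one, hwi] at this
      exact sub_eq_self.mp this
    have hwv : w = v := by
      have : C.sLin i w = w := by rw [sLin_apply', hKi, zero_smul, sub_zero]
      rw [← hv, this]
    rw [hwv] at hKi
    intro j hj
    rcases List.mem_cons.mp hj with h | h
    · rwa [h]
    · exact ih hndt hwv j h

/-- the symmetrized Cartan matrix, as a real matrix -/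
def Mmat : Matrix (Fin n) (Fin n) ℝ := Matrix.of fun i j => C.d i * (C.a i j : ℝ)

lemma Mmat_posSemidef : (C.Mmat).PosSemidef := by
  rw [Matrix.posSemidef_iff_dotProduct_mulVec]
  constructor
  · ext i j
    rw [Matrix.conjTranspose_apply, star_trivial]
    exact (C.symmetrizable j i)
  · intro x
    have h := C.posSemidef x
    have : dotProduct (star x) (Matrix.mulVec C.Mmat x)
        = ∑ i, ∑ j, x i * x j * (C.d i * (C.a i j : ℝ)) := by
      simp only [star_trivial, dotProduct, Matrix.mulVec, Mmat, Matrix.of_apply,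
        Finset.mul_sum]
      exact Finset.sum_congr rfl fun i _ => Finset.sum_congr rfl fun j _ => by ring
    rw [this]
    exact h

lemma Qzero_col (x : Fin n → ℝ)
    (hQ : ∑ i, ∑ j, x i * x j * (C.d i * (C.a i j : ℝ)) = 0) :
    ∀ j, ∑ i, x i * (C.d i * (C.a i j : ℝ)) = 0 := by
  have hdot : dotProduct (star x) (Matrix.mulVec C.Mmat x)
      = ∑ i, ∑ j, x i * x j * (C.d i * (C.a i j : ℝ)) := by
    simp only [star_trivial, dotProduct, Matrix.mulVec, Mmat, Matrix.of_apply,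
      Finset.mul_sum]
    exact Finset.sum_congr rfl fun i _ => Finset.sum_congr rfl fun j _ => by ring
  have h0 : Matrix.mulVec C.Mmat x = 0 := by
    apply (C.Mmat_posSemidef.dotProduct_mulVec_zero_iff x).mp
    rw [hdot]; exact hQ
  intro j
  have hj := congrFun h0 j
  simp only [Matrix.mulVec, dotProduct, Mmat, Matrix.of_apply, Pi.zero_apply] at hj
  rw [← hj]
  refine Finset.sum_congr rfl fun i _ => ?_
  rw [C.symmetrizable i j]
  ring

lemma dzaff_ne (aff : Fin n) : ((C.dz aff : ℤ) : ℂ) ≠ 0 := by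
  exact_mod_cast ne_of_gt (C.dz_pos aff)

lemma erase_ne_univ (aff : Fin n) :
    (Finset.univ.erase aff : Finset (Fin n)) ≠ Finset.univ := by
  intro h
  have := Finset.mem_univ aff
  rw [← h] at this
  exact Finset.notMem_erase aff _ this

lemma supp_erase (aff : Fin n) (x : Fin n → ℝ) (hx : x aff = 0) :
    ∀ i, i ∉ (Finset.univ.erase aff : Finset (Fin n)) → x i = 0 := by
  intro i hi
  have : i = aff := by
    by_contra hia
    exact hi (Finset.mem_erase.mpr ⟨hia, Finset.mem_univ i⟩)
  rwa [this]

lemma real_ker_zero (aff : Fin n) (x : Fin n → ℝ)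
    (hx : ∀ j, ∑ i, x i * (C.d i * (C.a i j : ℝ)) = 0) (haffx : x aff = 0) : x = 0 := by
  by_contra hne
  have hQ : ∑ i, ∑ j, x i * x j * (C.d i * (C.a i j : ℝ)) = 0 := by
    rw [Finset.sum_comm]
    refine Finset.sum_eq_zero fun j _ => ?_
    have h : ∑ i, x i * x j * (C.d i * (C.a i j : ℝ))
        = x j * ∑ i, x i * (C.d i * (C.a i j : ℝ)) := by
      rw [Finset.mul_sum]
      exact Finset.sum_congr rfl fun i _ => by ring
    rw [h, hx j, mul_zero]
  exact absurd hQ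
    (ne_of_gt (C.proper_posDef _ (erase_ne_univ aff) x (supp_erase aff x haffx) hne))

lemma ker_to_delta (aff : Fin n) (v : V n) (hv : ∀ j, C.K v (α j) = 0) :
    ∃ t : ℂ, v = t • C.δv := by
  set t : ℂ := v aff / ((C.dz aff : ℤ) : ℂ) with ht
  refine ⟨t, ?_⟩
  set w : V n := v - t • C.δv with hwdef
  have hwaff : w aff = 0 := by
    simp only [hwdef, Pi.sub_apply, Pi.smul_apply, smul_eq_mul, δv, ht]
    rw [div_mul_cancel₀ _ (C.dzaff_ne aff), sub_self]
  have hw : ∀ j, ∑ i, w i * ((C.d i : ℂ) * (C.a i j : ℂ)) = 0 := by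
    intro j
    have h1 : ∑ i, v i * ((C.d i : ℂ) * (C.a i j : ℂ)) = 0 := by
      rw [← C.K_apply_α_right]; exact hv j
    have h2 := C.row_ker_c j
    calc ∑ i, w i * ((C.d i : ℂ) * (C.a i j : ℂ))
        = ∑ i, (v i * ((C.d i : ℂ) * (C.a i j : ℂ))
            - t * (((C.dz i : ℤ) : ℂ) * ((C.d i : ℂ) * (C.a i j : ℂ)))) := by
          refine Finset.sum_congr rfl fun i _ => ?_
          simp only [hwdef, Pi.sub_apply, Pi.smul_apply, smul_eq_mul, δv]
          ring
      _ = (∑ i, v i * ((C.d i : ℂ) * (C.a i j : ℂ)))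
            - t * ∑ i, ((C.dz i : ℤ) : ℂ) * ((C.d i : ℂ) * (C.a i j : ℂ)) := by
          rw [Finset.sum_sub_distrib, Finset.mul_sum]
      _ = 0 := by rw [h1, h2, mul_zero, sub_zero]
  have hre : ∀ j, ∑ i, (w i).re * (C.d i * (C.a i j : ℝ)) = 0 := by
    intro j
    have h := congrArg Complex.re (hw j)
    rw [Complex.re_sum] at h
    simp only [C.cast_da, Complex.mul_re, Complex.ofReal_re, Complex.ofReal_im, mul_zero,
      sub_zero, Complex.zero_re] at h
    exact h
  have him : ∀ j, ∑ i, (w i).im * (C.d i * (C.a i j : ℝ)) = 0 := by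
    intro j
    have h := congrArg Complex.im (hw j)
    rw [Complex.im_sum] at h
    simp only [C.cast_da, Complex.mul_im, Complex.ofReal_re, Complex.ofReal_im, mul_zero,
      zero_add, Complex.zero_im] at h
    exact h
  have hx := C.real_ker_zero aff (fun i => (w i).re) hre
    (by show (w aff).re = 0; rw [hwaff]; rfl)
  have hy := C.real_ker_zero aff (fun i => (w i).im) him
    (by show (w aff).im = 0; rw [hwaff]; rfl)
  have hw0 : w = 0 := by
    funext i
    exact Complex.ext (congrFun hx i) (congrFun hy i)
  have hw0' : v - t • C.δv = 0 := by rw [← hwdef]; exact hw0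
  exact sub_eq_zero.mp hw0'

lemma Hzero (aff : Fin n) (u : V n) (h : C.K (cj u) u = 0) : ∃ t : ℂ, u = t • C.δv := by
  have hre := congrArg Complex.re h
  rw [K_apply'] at hre
  simp only [Complex.re_sum] at hre
  have hterm : ∀ i j : Fin n, ((cj u) i * u j * ((C.d i : ℂ) * (C.a i j : ℂ))).re
      = ((u i).re * (u j).re + (u i).im * (u j).im) * (C.d i * (C.a i j : ℝ)) := by
    intro i j
    rw [C.cast_da]
    simp only [cj, Complex.mul_re, Complex.mul_im, Complex.ofReal_re, Complex.ofReal_im,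
      mul_zero, sub_zero, Complex.conj_re, Complex.conj_im]
    ring
  simp only [hterm, Complex.zero_re] at hre
  have hsplit : ∑ i, ∑ j, ((u i).re * (u j).re + (u i).im * (u j).im) * (C.d i * (C.a i j : ℝ))
      = (∑ i, ∑ j, (u i).re * (u j).re * (C.d i * (C.a i j : ℝ)))
        + (∑ i, ∑ j, (u i).im * (u j).im * (C.d i * (C.a i j : ℝ))) := by
    rw [← Finset.sum_add_distrib]
    refine Finset.sum_congr rfl fun i _ => ?_
    rw [← Finset.sum_add_distrib]
    exact Finset.sum_congr rfl fun j _ => by ring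
  rw [hsplit] at hre
  have h1 := C.posSemidef fun i => (u i).re
  have h2 := C.posSemidef fun i => (u i).im
  have hQx : ∑ i, ∑ j, (u i).re * (u j).re * (C.d i * (C.a i j : ℝ)) = 0 := by linarith
  have hQy : ∑ i, ∑ j, (u i).im * (u j).im * (C.d i * (C.a i j : ℝ)) = 0 := by linarith
  have hcolx := C.Qzero_col (fun i => (u i).re) hQx
  have hcoly := C.Qzero_col (fun i => (u i).im) hQy
  refine C.ker_to_delta aff u fun j => ?_
  rw [C.K_apply_α_right]
  apply Complex.ext
  · rw [Complex.re_sum]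
    simp only [C.cast_da, Complex.mul_re, Complex.ofReal_re, Complex.ofReal_im, mul_zero,
      sub_zero, Complex.zero_re]
    exact hcolx j
  · rw [Complex.im_sum]
    simp only [C.cast_da, Complex.mul_im, Complex.ofReal_re, Complex.ofReal_im, mul_zero,
      zero_add, Complex.zero_im]
    exact hcoly j

lemma fix_to_delta (aff : Fin n) (v : V n) (hv : C.cox v = v) : ∃ t : ℂ, v = t • C.δv := by
  have h := C.peel (List.finRange n) (List.nodup_finRange n) v
    (by rw [← C.cox_apply']; exact hv)
  refine C.ker_to_delta aff v fun j => ?_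
  rw [C.K_symm', C.K_α_eq, h j (List.mem_finRange j), mul_zero]

end Aux

/-- Proposition 3.1(4): the direct sum `U c` of all eigenspaces of `c` is
`{v : K (γ_c) v = 0}`. -/
theorem eigSpan_eq_orthogonal {n : ℕ} (C : AffineGCM n) (aff : Fin n)
    (haff : ((Subgroup.closure (C.s '' {j : Fin n | j ≠ aff}) : Subgroup (V n ≃ₗ[ℂ] V n)) : Set (V n ≃ₗ[ℂ] V n)).Finite) :
    ∀ γ : V n, γ ∈ Vfin aff → C.cox γ - γ = C.δv →
      ∀ v : V n, v ∈ eigSpan C.cox ↔ C.K γ v = 0 := by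
  intro γ hγVfin hγδ
  -- the affine coordinate of `γ` vanishes
  have hγaff : γ aff = 0 := by
    have hle : Vfin aff ≤ LinearMap.ker (LinearMap.proj aff : V n →ₗ[ℂ] ℂ) := by
      rw [Vfin, Submodule.span_le]
      rintro x ⟨i, hi, rfl⟩
      simp only [SetLike.mem_coe, LinearMap.mem_ker, LinearMap.proj_apply]
      exact Pi.single_eq_of_ne (Ne.symm hi) 1
    exact hle hγVfin
  have hδaff : C.δv aff = ((C.dz aff : ℤ) : ℂ) := rfl
  have hcoxγ : C.cox γ = γ + C.δv := by
    have h := sub_eq_iff_eq_add.mp hγδ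
    rw [h, add_comm]
  -- `γ` is a real vector
  have hcjadd : cj (γ + C.δv) = cj γ + C.δv := by
    funext k
    simp only [cj, Pi.add_apply, map_add]
    rw [show (starRingEnd ℂ) (C.δv k) = C.δv k from congrFun C.cj_δ k]
  have hγreal : cj γ = γ := by
    have hcoxcj : C.cox (cj γ) = cj γ + C.δv := by
      rw [← C.cj_cox, hcoxγ, hcjadd]
    have h1 : C.cox (γ - cj γ) = γ - cj γ := by
      rw [map_sub, hcoxγ, hcoxcj]
      abel
    obtain ⟨t, ht⟩ := C.fix_to_delta aff _ h1
    have h2 : γ aff - (cj γ) aff = t * C.δv aff := by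
      have := congrFun ht aff
      rwa [Pi.sub_apply, Pi.smul_apply, smul_eq_mul] at this
    have hcjaff : (cj γ) aff = 0 := by
      show (starRingEnd ℂ) (γ aff) = 0
      rw [hγaff, map_zero]
    rw [hγaff, hcjaff, sub_zero, hδaff] at h2
    have ht0 : t = 0 := by
      rcases mul_eq_zero.mp h2.symm with h | h
      · exact h
      · exact absurd h (C.dzaff_ne aff)
    have : γ - cj γ = 0 := by rw [ht, ht0, zero_smul]
    have := sub_eq_zero.mp this
    exact this.symm
  -- `δ` and `γ` are nonzero, and `K γ γ ≠ 0`
  have hδne : C.δv ≠ 0 := by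
    intro h
    exact C.dzaff_ne aff (by rw [← hδaff, h]; rfl)
  have hγne : γ ≠ 0 := by
    intro h
    rw [h, map_zero, sub_zero] at hγδ
    exact hδne hγδ.symm
  have hγi : ∀ i, γ i = (((γ i).re : ℝ) : ℂ) := by
    intro i
    have him : (γ i).im = 0 := Complex.conj_eq_iff_im.mp (congrFun hγreal i)
    exact Complex.ext rfl (by simp [him])
  have hgne : (fun i => (γ i).re) ≠ (0 : Fin n → ℝ) := by
    intro h0
    apply hγne
    funext i
    rw [hγi i, congrFun h0 i]
    simp
  have hQpos : 0 < ∑ i, ∑ j, (γ i).re * (γ j).re * (C.d i * (C.a i j : ℝ)) :=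
    C.proper_posDef _ (erase_ne_univ aff) _
      (supp_erase aff _ (by show (γ aff).re = 0; rw [hγaff]; rfl)) hgne
  have hKγγ : C.K γ γ = ((∑ i, ∑ j, (γ i).re * (γ j).re * (C.d i * (C.a i j : ℝ)) : ℝ) : ℂ) := by
    rw [K_apply', Complex.ofReal_sum]
    refine Finset.sum_congr rfl fun i _ => ?_
    rw [Complex.ofReal_sum]
    refine Finset.sum_congr rfl fun j _ => ?_
    conv_lhs => rw [hγi i, hγi j]
    push_cast
    ring
  have hKγγne : C.K γ γ ≠ 0 := by
    rw [hKγγ]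
    exact_mod_cast ne_of_gt hQpos
  -- the containment `eigSpan ⊆ γ^⊥`
  have hEle : ∀ w, w ∈ eigSpan C.cox → C.K γ w = 0 := by
    have hle : eigSpan C.cox ≤ LinearMap.ker (C.K γ) := by
      simp only [eigSpan]
      refine iSup_le fun μ => ?_
      intro w hw
      rw [LinearMap.mem_ker]
      have hcw : C.cox w = μ • w := Module.End.mem_eigenspace_iff.mp hw
      by_cases hμ : μ = 1
      · subst hμ
        rw [one_smul] at hcw
        obtain ⟨t, ht⟩ := C.fix_to_delta aff w hcw
        rw [ht, map_smul, smul_eq_mul, C.K_right_δ, mul_zero]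
      · have h1 : C.K γ w = μ * C.K γ w := by
          conv_lhs => rw [← C.cox_K γ w]
          rw [hcoxγ, hcw]
          simp only [map_add, LinearMap.add_apply, map_smul, smul_eq_mul, C.K_left_δ,
            mul_zero, add_zero]
        have h2 : (1 - μ) * C.K γ w = 0 := by linear_combination h1
        rcases mul_eq_zero.mp h2 with h | h
        · exact absurd (by linear_combination -h : μ = 1) hμ
        · exact h
    exact fun w hw => LinearMap.mem_ker.mp (hle hw)
  -- the invariance of the Hermitian form and the main `core` computation
  have hHinv : ∀ u w : V n, C.K (cj (C.cox u)) (C.cox w) = C.K (cj u) w := by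
    intro u w
    rw [C.cj_cox, C.cox_K]
  have core : ∀ (u w : V n) (μ t : ℂ), C.cox u = μ • u + t • C.δv → C.cox w = μ • w + u →
      ∃ s : ℂ, u = s • C.δv := by
    intro u w μ t hu hw
    have hcju : cj (C.cox u) = (starRingEnd ℂ) μ • cj u + (starRingEnd ℂ) t • C.δv := by
      rw [hu]
      funext k
      simp only [cj, Pi.add_apply, Pi.smul_apply, smul_eq_mul, map_add, map_mul]
      rw [show (starRingEnd ℂ) (C.δv k) = C.δv k from congrFun C.cj_δ k]
    have e1 : C.K (cj (C.cox u)) (C.cox w) = C.K (cj u) w := hHinv u w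
    have e2 : C.K (cj (C.cox u)) (C.cox u) = C.K (cj u) u := hHinv u u
    rw [hcju, hw] at e1
    rw [hcju, hu] at e2
    simp only [map_add, map_smul, LinearMap.add_apply, LinearMap.smul_apply, smul_eq_mul,
      C.K_left_δ, C.K_right_δ, mul_zero, add_zero, zero_add, mul_add] at e1 e2
    have hH : C.K (cj u) u = 0 := by
      by_cases hμ1 : (starRingEnd ℂ) μ * μ = 1
      · have hcne : (starRingEnd ℂ) μ ≠ 0 := by
          intro h
          rw [h, zero_mul] at hμ1
          exact zero_ne_one hμ1
        have h3 : (starRingEnd ℂ) μ * C.K (cj u) u = 0 := by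
          linear_combination e1 - (C.K (cj u) w) * hμ1
        rcases mul_eq_zero.mp h3 with h | h
        · exact absurd h hcne
        · exact h
      · have h3 : ((starRingEnd ℂ) μ * μ - 1) * C.K (cj u) u = 0 := by
          linear_combination e2
        rcases mul_eq_zero.mp h3 with h | h
        · exact absurd (by linear_combination h : (starRingEnd ℂ) μ * μ = 1) hμ1
        · exact h
    exact C.Hzero aff u hH
  -- the generalized eigenspace claims
  set cE : Module.End ℂ (V n) := (C.cox : Module.End ℂ (V n)) with hcE
  have cEapp : ∀ w, cE w = C.cox w := fun w => rfl
  have claim1 : ∀ (k : ℕ) (w : V n), ((cE - 1) ^ k) w = 0 →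
      ∃ t : ℂ, C.cox w - w = t • C.δv := by
    intro k
    induction k with
    | zero =>
      intro w hw
      simp only [pow_zero, Module.End.one_apply] at hw
      exact ⟨0, by rw [hw, map_zero, sub_zero, zero_smul]⟩
    | succ k ih =>
      intro w hw
      have h1 : ((cE - 1) ^ k) ((cE - 1) w) = 0 := by
        rw [← Module.End.mul_apply, ← pow_succ]
        exact hw
      obtain ⟨t, ht⟩ := ih _ h1
      have hsub : (cE - 1) w = C.cox w - w := by
        rw [LinearMap.sub_apply, Module.End.one_apply, cEapp]
      rw [hsub] at ht
      have hcu : C.cox (C.cox w - w) = (1 : ℂ) • (C.cox w - w) + t • C.δv := by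
        rw [one_smul, ← ht]
        abel
      have hcw : C.cox w = (1 : ℂ) • w + (C.cox w - w) := by
        rw [one_smul]
        abel
      obtain ⟨s, hs⟩ := core (C.cox w - w) w 1 t hcu hcw
      exact ⟨s, hs⟩
  have claim2 : ∀ (μ : ℂ), μ ≠ 1 → ∀ (k : ℕ) (w : V n), ((cE - μ • 1) ^ k) w = 0 →
      (cE - μ • 1) w = 0 := by
    intro μ hμ
    have hsub : ∀ w, (cE - μ • 1) w = C.cox w - μ • w := by
      intro w
      rw [LinearMap.sub_apply, LinearMap.smul_apply, Module.End.one_apply, cEapp]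
    have core2 : ∀ w, (cE - μ • 1) ((cE - μ • 1) w) = 0 → (cE - μ • 1) w = 0 := by
      intro w h
      rw [hsub, hsub] at h
      have hcu : C.cox (C.cox w - μ • w) = μ • (C.cox w - μ • w) + (0 : ℂ) • C.δv := by
        rw [zero_smul, add_zero, ← sub_eq_zero]
        exact h
      have hcw : C.cox w = μ • w + (C.cox w - μ • w) := by abel
      obtain ⟨s, hs⟩ := core (C.cox w - μ • w) w μ 0 hcu hcw
      have hcoxu : C.cox (C.cox w - μ • w) = C.cox w - μ • w := by
        rw [hs, map_smul, C.cox_δ]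
      have heq : C.cox w - μ • w = μ • (C.cox w - μ • w) := by
        conv_lhs => rw [← hcoxu, hcu, zero_smul, add_zero]
      have h2 : (1 - μ) • (C.cox w - μ • w) = 0 := by
        rw [sub_smul, one_smul, sub_eq_zero]
        exact heq
      rcases smul_eq_zero.mp h2 with h3 | h3
      · exact absurd (by linear_combination -h3 : μ = 1) hμ
      · rw [hsub]
        exact h3
    intro k
    induction k with
    | zero =>
      intro w hw
      simp only [pow_zero, Module.End.one_apply] at hw
      rw [hw, map_zero]
    | succ k ih =>
      intro w hw
      have h1 : ((cE - μ • 1) ^ k) ((cE - μ • 1) w) = 0 := by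
        rw [← Module.End.mul_apply, ← pow_succ]
        exact hw
      exact core2 w (ih _ h1)
  -- every vector is a sum of an eigenvector combination and a multiple of `γ`
  have heig_le : ∀ μ : ℂ, Module.End.eigenspace cE μ ≤ eigSpan C.cox := by
    intro μ
    simp only [eigSpan]
    exact le_iSup (fun μ : ℂ => Module.End.eigenspace cE μ) μ
  have htop : ∀ w : V n, w ∈ eigSpan C.cox ⊔ Submodule.span ℂ {γ} := by
    intro w
    have h1 : (⊤ : Submodule ℂ (V n)) ≤ eigSpan C.cox ⊔ Submodule.span ℂ {γ} := by
      rw [← Module.End.iSup_maxGenEigenspace_eq_top cE]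
      refine iSup_le fun μ => ?_
      intro z hz
      obtain ⟨k, hk⟩ := (Module.End.mem_maxGenEigenspace cE μ z).mp hz
      by_cases hμ : μ = 1
      · subst hμ
        rw [one_smul] at hk
        obtain ⟨t, ht⟩ := claim1 k z hk
        have hz2 : C.cox z = z + t • C.δv := by
          rw [← ht]
          abel
        have hz1 : z - t • γ ∈ Module.End.eigenspace cE 1 := by
          rw [Module.End.mem_eigenspace_iff, one_smul]
          show C.cox (z - t • γ) = z - t • γ
          rw [map_sub, map_smul, hcoxγ, hz2, smul_add]
          abel
        have hdecomp : z = (z - t • γ) + t • γ := by abel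
        rw [hdecomp]
        exact Submodule.add_mem _
          (Submodule.mem_sup_left (heig_le 1 hz1))
          (Submodule.mem_sup_right
            (Submodule.smul_mem _ t (Submodule.mem_span_singleton_self γ)))
      · have h0 : (cE - μ • 1) z = 0 := claim2 μ hμ k z hk
        have hz1 : z ∈ Module.End.eigenspace cE μ := by
          rw [Module.End.mem_eigenspace_iff]
          have h0' : C.cox z - μ • z = 0 := by
            rw [← h0, LinearMap.sub_apply, LinearMap.smul_apply, Module.End.one_apply, cEapp]
          have := sub_eq_zero.mp h0'
          exact this
        exact Submodule.mem_sup_left (heig_le μ hz1)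
    exact h1 (Submodule.mem_top)
  -- conclusion
  intro v
  constructor
  · exact hEle v
  · intro hv
    obtain ⟨e, he, g, hg, hsum⟩ := Submodule.mem_sup.mp (htop v)
    obtain ⟨t, rfl⟩ := Submodule.mem_span_singleton.mp hg
    have hKe : C.K γ e = 0 := hEle e he
    have hcomp : C.K γ v = C.K γ e + t * C.K γ γ := by
      rw [← hsum, map_add, map_smul, smul_eq_mul]
    rw [hv, hKe, zero_add] at hcomp
    have ht0 : t = 0 := by
      rcases mul_eq_zero.mp hcomp.symm with h | h
      · exact h
      · exact absurd h hKγγne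
    rw [← hsum, ht0, zero_smul, add_zero]
    exact he

end AffineGCM
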